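/- Main dissipation inequality for energy fluctuations (the key inequality (B.3) in static form): if λ ≥ 0 is a spectral-gap lower bound for (k, M), then ∑_{α,β∈I} k_{αβ} ∬ ( (1/2)|u_α(x) − u_β(y)|² + e_α(x) + e_β(y) ) dμ_α(x) dμ_β(y) ≥ (ζλ/M) ∑_{α,β∈I} ∬ ( (1/2)|u_α(x) − u_β(y)|² + e_α(x) + e_β(y) ) dμ_α(x) dμ_β(y), i.e. the weighted dissipation dominates 2ζλ times the energy fluctuation δE := (1/(2M)) ∑_{α,β} ∬ ( (1/2)|u_α(x) − u_β(y)|² + e_α(x) + e_β(y) ) dμ_α dμ_β. -/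

import Mathlib

open MeasureTheory Finset

open scoped RealInnerProductSpace

section auxlemmas
variable {d : ℕ}

lemma aux_int_of_sq (μ : Measure (EuclideanSpace ℝ (Fin d))) [IsFiniteMeasure μ]
    (u : EuclideanSpace ℝ (Fin d) → EuclideanSpace ℝ (Fin d)) (hm : Measurable u)
    (h2 : Integrable (fun x => ‖u x‖ ^ 2) μ) : Integrable u μ := by
  refine Integrable.mono' ((integrable_const 1).add h2) hm.aestronglyMeasurable ?_
  filter_upwards with x
  simp only [Pi.add_apply]
  nlinarith [sq_nonneg (‖u x‖ - 1), norm_nonneg (u x)]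

lemma aux_cs_int (μ : Measure (EuclideanSpace ℝ (Fin d))) [IsFiniteMeasure μ]
    (u : EuclideanSpace ℝ (Fin d) → EuclideanSpace ℝ (Fin d)) (hm : Measurable u)
    (h2 : Integrable (fun x => ‖u x‖ ^ 2) μ) (hpos : 0 < (μ Set.univ).toReal) :
    ‖∫ x, u x ∂μ‖ ^ 2 ≤ (μ Set.univ).toReal * ∫ x, ‖u x‖ ^ 2 ∂μ := by
  have hui : Integrable u μ := aux_int_of_sq μ u hm h2
  have hn : Integrable (fun x => ‖u x‖) μ := hui.norm
  set Mm := (μ Set.univ).toReal with hMm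
  set N := ∫ x, ‖u x‖ ∂μ with hN
  set a := ∫ x, ‖u x‖ ^ 2 ∂μ with ha
  have hN0 : 0 ≤ N := integral_nonneg fun x => norm_nonneg _
  set t := N / Mm with ht
  have h0 : 0 ≤ ∫ x, (‖u x‖ - t) ^ 2 ∂μ := integral_nonneg fun x => sq_nonneg _
  have i1 : Integrable (fun x => ‖u x‖ ^ 2 - 2 * t * ‖u x‖) μ := h2.sub (hn.const_mul _)
  have hexp : ∫ x, (‖u x‖ - t) ^ 2 ∂μ = a - 2 * t * N + t ^ 2 * Mm := by
    have hfe : (fun x => (‖u x‖ - t) ^ 2)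
        = fun x => (‖u x‖ ^ 2 - 2 * t * ‖u x‖) + t ^ 2 := by funext x; ring
    rw [hfe, integral_add i1 (integrable_const _),
      integral_sub h2 (hn.const_mul _), integral_const_mul, integral_const,
      smul_eq_mul, measureReal_def]
    ring
  have hMne : Mm ≠ 0 := ne_of_gt hpos
  have key : t ^ 2 * Mm = N ^ 2 / Mm := by rw [ht]; field_simp
  have key2 : 2 * t * N = 2 * (N ^ 2 / Mm) := by rw [ht]; field_simp
  rw [hexp, key, key2] at h0
  have hdiv : N ^ 2 / Mm ≤ a := by linarith
  have hNle : N ^ 2 ≤ a * Mm := (div_le_iff₀ hpos).mp hdiv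
  have hle : ‖∫ x, u x ∂μ‖ ≤ N := norm_integral_le_integral_norm _
  nlinarith [pow_le_pow_left₀ (norm_nonneg (∫ x, u x ∂μ)) hle 2]

lemma aux_inner_int (ν : Measure (EuclideanSpace ℝ (Fin d))) [IsFiniteMeasure ν]
    (v : EuclideanSpace ℝ (Fin d) → EuclideanSpace ℝ (Fin d))
    (hv : Integrable v ν) (hv2 : Integrable (fun y => ‖v y‖ ^ 2) ν)
    (f : EuclideanSpace ℝ (Fin d) → ℝ) (hf : Integrable f ν)
    (c : EuclideanSpace ℝ (Fin d)) (a : ℝ) :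
    ∫ y, ((1 / 2) * ‖c - v y‖ ^ 2 + a + f y) ∂ν
      = (ν Set.univ).toReal * ((1 / 2) * ‖c‖ ^ 2 + a) - ⟪c, ∫ y, v y ∂ν⟫
        + (1 / 2) * ∫ y, ‖v y‖ ^ 2 ∂ν + ∫ y, f y ∂ν := by
  have h1 : (fun y => (1 / 2) * ‖c - v y‖ ^ 2 + a + f y)
      = fun y => ((1 / 2) * ‖c‖ ^ 2 + a + -⟪c, v y⟫) + ((1 / 2) * ‖v y‖ ^ 2 + f y) := by
    funext y; rw [norm_sub_sq_real]; ring
  have i2 : Integrable (fun y => -⟪c, v y⟫) ν := (hv.const_inner c).neg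
  have i1 : Integrable (fun y => (1 / 2) * ‖c‖ ^ 2 + a + -⟪c, v y⟫) ν := by
    exact (integrable_const _).add i2
  have i3 : Integrable (fun y => (1 / 2) * ‖v y‖ ^ 2 + f y) ν := by
    exact (hv2.const_mul _).add hf
  rw [h1, integral_add i1 i3]
  have e1 : ∫ y, ((1 / 2) * ‖c‖ ^ 2 + a + -⟪c, v y⟫) ∂ν
      = (ν Set.univ).toReal * ((1 / 2) * ‖c‖ ^ 2 + a) - ⟪c, ∫ y, v y ∂ν⟫ := by
    rw [integral_add (integrable_const _) i2, integral_neg, integral_inner hv c,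
      integral_const, smul_eq_mul, measureReal_def]
    ring
  have e2 : ∫ y, ((1 / 2) * ‖v y‖ ^ 2 + f y) ∂ν
      = (1 / 2) * (∫ y, ‖v y‖ ^ 2 ∂ν) + ∫ y, f y ∂ν := by
    rw [integral_add (hv2.const_mul _) hf, integral_const_mul]
  rw [e1, e2]; ring

lemma aux_dbl (μ ν : Measure (EuclideanSpace ℝ (Fin d))) [IsFiniteMeasure μ] [IsFiniteMeasure ν]
    (u v : EuclideanSpace ℝ (Fin d) → EuclideanSpace ℝ (Fin d))
    (hu : Measurable u) (hv : Measurable v)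
    (hu2 : Integrable (fun x => ‖u x‖ ^ 2) μ) (hv2 : Integrable (fun y => ‖v y‖ ^ 2) ν)
    (e f : EuclideanSpace ℝ (Fin d) → ℝ) (he : Integrable e μ) (hf : Integrable f ν) :
    ∫ x, ∫ y, ((1 / 2) * ‖u x - v y‖ ^ 2 + e x + f y) ∂ν ∂μ
      = (ν Set.univ).toReal * ((1 / 2) * (∫ x, ‖u x‖ ^ 2 ∂μ) + ∫ x, e x ∂μ)
        + (μ Set.univ).toReal * ((1 / 2) * (∫ y, ‖v y‖ ^ 2 ∂ν) + ∫ y, f y ∂ν)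
        - ⟪∫ x, u x ∂μ, ∫ y, v y ∂ν⟫ := by
  have hvi : Integrable v ν := aux_int_of_sq ν v hv hv2
  have hui : Integrable u μ := aux_int_of_sq μ u hu hu2
  set V := ∫ y, v y ∂ν with hV
  set C : ℝ := (1 / 2) * (∫ y, ‖v y‖ ^ 2 ∂ν) + ∫ y, f y ∂ν with hC
  have h1 : (fun x => ∫ y, ((1 / 2) * ‖u x - v y‖ ^ 2 + e x + f y) ∂ν)
      = fun x => ((ν Set.univ).toReal * ((1 / 2) * ‖u x‖ ^ 2 + e x) + -⟪V, u x⟫) + C := by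
    funext x
    rw [aux_inner_int ν v hvi hv2 f hf (u x) (e x), real_inner_comm]
    ring
  have i2 : Integrable (fun x => -⟪V, u x⟫) μ := (hui.const_inner V).neg
  have i1 : Integrable
      (fun x => (ν Set.univ).toReal * ((1 / 2) * ‖u x‖ ^ 2 + e x) + -⟪V, u x⟫) μ := by
    exact (((hu2.const_mul _).add he).const_mul _).add i2
  rw [h1, integral_add i1 (integrable_const _), integral_add (show Integrable
      (fun x => (ν Set.univ).toReal * ((1 / 2) * ‖u x‖ ^ 2 + e x)) μ from
      ((hu2.const_mul _).add he).const_mul _) i2, integral_neg, integral_inner hui V,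
    integral_const_mul, integral_add (hu2.const_mul _) he, integral_const_mul,
    integral_const, smul_eq_mul, measureReal_def, real_inner_comm]
  ring

end auxlemmas

/-- Main dissipation inequality for energy fluctuations (the key inequality (B.3)
in static form): the weighted dissipation dominates `2ζλ` times the energy
fluctuation `δE`. -/
theorem stmt_7 {I : Type*} [Fintype I] [DecidableEq I] [Nonempty I]
    (hcard : 1 < Fintype.card I)
    (M : I → ℝ) (hM : ∀ α, 0 < M α)
    (k : I → I → ℝ) (hk_nonneg : ∀ α β, 0 ≤ k α β) (hk_symm : ∀ α β, k α β = k β α)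
    (lam : ℝ) (hlam : 0 ≤ lam)
    (hgap : ∀ y : I → ℝ,
      lam * ∑ α, ∑ β ∈ univ.filter (fun β => β ≠ α), (y α - y β) ^ 2 * M α * M β
        ≤ (∑ α, M α) *
            ∑ α, ∑ β ∈ univ.filter (fun β => β ≠ α), k α β * (y α - y β) ^ 2 * M α * M β)
    (ζ : ℝ) (hζ : ζ = 1 - (univ.sup' univ_nonempty M) / (∑ α, M α))
    {d : ℕ} (hd : 1 ≤ d)
    (μ : I → Measure (EuclideanSpace ℝ (Fin d)))
    [∀ α, IsFiniteMeasure (μ α)]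
    (hμ : ∀ α, ((μ α) Set.univ).toReal = M α)
    (u : I → EuclideanSpace ℝ (Fin d) → EuclideanSpace ℝ (Fin d))
    (hu_meas : ∀ α, Measurable (u α))
    (hu_int : ∀ α, Integrable (fun x => ‖u α x‖ ^ 2) (μ α))
    (e : I → EuclideanSpace ℝ (Fin d) → ℝ)
    (he_meas : ∀ α, Measurable (e α))
    (he_nonneg : ∀ α x, 0 ≤ e α x)
    (he_int : ∀ α, Integrable (e α) (μ α)) :
    (ζ * lam / (∑ α, M α)) *
        ∑ α, ∑ β, ∫ x, ∫ y,
          ((1 / 2) * ‖u α x - u β y‖ ^ 2 + e α x + e β y) ∂(μ β) ∂(μ α)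
      ≤ ∑ α, ∑ β, k α β * ∫ x, ∫ y,
          ((1 / 2) * ‖u α x - u β y‖ ^ 2 + e α x + e β y) ∂(μ β) ∂(μ α) := by
  classical
  set Mtot := ∑ α, M α with hMtotdef
  have hMtot : 0 < Mtot := Finset.sum_pos (fun α _ => hM α) univ_nonempty
  -- basic data
  set a : I → ℝ := fun α => ∫ x, ‖u α x‖ ^ 2 ∂(μ α) with hadef
  set Ee : I → ℝ := fun α => ∫ x, e α x ∂(μ α) with hEdef
  set v : I → EuclideanSpace ℝ (Fin d) := fun α => ∫ x, u α x ∂(μ α) with hvdef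
  set w : I → EuclideanSpace ℝ (Fin d) := fun α => (M α)⁻¹ • v α with hwdef
  set g : I → ℝ := fun α => (1 / 2) * a α + Ee α - (1 / 2) * (M α * ‖w α‖ ^ 2) with hgdef
  have hvw : ∀ α, v α = M α • w α := by
    intro α
    rw [hwdef]
    simp only
    rw [smul_smul, mul_inv_cancel₀ (hM α).ne', one_smul]
  -- decomposition of the double integrals
  have hI : ∀ α β, (∫ x, ∫ y,
      ((1 / 2) * ‖u α x - u β y‖ ^ 2 + e α x + e β y) ∂(μ β) ∂(μ α))
      = (1 / 2) * (M α * M β) * ‖w α - w β‖ ^ 2 + M β * g α + M α * g β := by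
    intro α β
    rw [aux_dbl (μ α) (μ β) (u α) (u β) (hu_meas α) (hu_meas β) (hu_int α) (hu_int β)
      (e α) (e β) (he_int α) (he_int β), hμ α, hμ β]
    have h2 : ⟪v α, v β⟫ = M α * (M β * ⟪w α, w β⟫) := by
      rw [hvw α, hvw β, real_inner_smul_left, real_inner_smul_right]
    have h3 : ‖w α - w β‖ ^ 2 = ‖w α‖ ^ 2 - 2 * ⟪w α, w β⟫ + ‖w β‖ ^ 2 :=
      norm_sub_sq_real _ _
    show M β * ((1/2) * a α + Ee α) + M α * ((1/2) * a β + Ee β) - ⟪v α, v β⟫ = _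
    rw [h2, h3, hgdef]
    ring
  -- nonnegativity of g
  have hg : ∀ α, 0 ≤ g α := by
    intro α
    have hpos : 0 < ((μ α) Set.univ).toReal := by rw [hμ α]; exact hM α
    have hcs : ‖v α‖ ^ 2 ≤ M α * a α := by
      have := aux_cs_int (μ α) (u α) (hu_meas α) (hu_int α) hpos
      rwa [hμ α] at this
    have hwnorm : ‖w α‖ ^ 2 = ((M α)⁻¹) ^ 2 * ‖v α‖ ^ 2 := by
      rw [hwdef]
      simp only
      rw [norm_smul, Real.norm_eq_abs, abs_of_pos (inv_pos.mpr (hM α))]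
      ring
    have hE0 : 0 ≤ Ee α := integral_nonneg fun x => he_nonneg α x
    have h1 : M α * ‖w α‖ ^ 2 ≤ a α := by
      rw [hwnorm]
      have hMne : M α ≠ 0 := (hM α).ne'
      rw [show M α * ((M α)⁻¹ ^ 2 * ‖v α‖ ^ 2) = ‖v α‖ ^ 2 / M α by field_simp]
      rw [div_le_iff₀ (hM α)]
      linarith [hcs]
    rw [hgdef]
    simp only
    linarith
  -- ζ bounds
  have hsup_le : univ.sup' univ_nonempty M ≤ Mtot :=
    Finset.sup'_le _ _ fun b _ => Finset.single_le_sum (fun i _ => (hM i).le) (mem_univ b)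
  have hM_le_sup : ∀ γ, M γ ≤ univ.sup' univ_nonempty M :=
    fun γ => Finset.le_sup' M (mem_univ γ)
  have hsup_pos : 0 < univ.sup' univ_nonempty M :=
    lt_of_lt_of_le (hM (Classical.arbitrary I)) (hM_le_sup _)
  have hζ0 : 0 ≤ ζ := by
    rw [hζ]
    have : univ.sup' univ_nonempty M / Mtot ≤ 1 := (div_le_one hMtot).mpr hsup_le
    linarith
  have hζ1 : ζ ≤ 1 := by
    rw [hζ]
    have : 0 ≤ univ.sup' univ_nonempty M / Mtot := le_of_lt (div_pos hsup_pos hMtot)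
    linarith
  -- degree bound from the gap applied to indicators
  have hdeg : ∀ γ, lam * ζ ≤ ∑ β ∈ univ.erase γ, k γ β * M β := by
    intro γ
    set S := ∑ β ∈ univ.erase γ, M β with hSdef
    set K := ∑ β ∈ univ.erase γ, k γ β * M β with hKdef
    set y : I → ℝ := fun α => if α = γ then 1 else 0 with hydef
    have hyγ : y γ = 1 := if_pos rfl
    have hyne : ∀ β, β ≠ γ → y β = 0 := fun β h => if_neg h
    have hgy := hgap y
    have hL : ∑ α, ∑ β ∈ univ.filter (fun β => β ≠ α), (y α - y β) ^ 2 * M α * M β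
        = 2 * (M γ * S) := by
      simp only [Finset.filter_ne']
      rw [← Finset.sum_erase_add _ _ (mem_univ γ)]
      have hFγ : ∑ β ∈ univ.erase γ, (y γ - y β) ^ 2 * M γ * M β = M γ * S := by
        rw [hSdef, Finset.mul_sum]
        refine Finset.sum_congr rfl fun β hβ => ?_
        rw [hyγ, hyne β (Finset.ne_of_mem_erase hβ)]
        ring
      have hFα : ∀ α ∈ univ.erase γ,
          ∑ β ∈ univ.erase α, (y α - y β) ^ 2 * M α * M β = M α * M γ := by
        intro α hα
        have hαγ : α ≠ γ := Finset.ne_of_mem_erase hα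
        have hcongr : ∀ β ∈ univ.erase α,
            (y α - y β) ^ 2 * M α * M β = if β = γ then M β * M α else 0 := by
          intro β hβ
          by_cases hc : β = γ
          · subst hc
            rw [hyne α hαγ, hyγ, if_pos rfl]
            ring
          · rw [hyne α hαγ, hyne β hc, if_neg hc]
            ring
        rw [Finset.sum_congr rfl hcongr, Finset.sum_ite_eq' (univ.erase α) γ
          (fun β => M β * M α), if_pos (Finset.mem_erase.mpr ⟨Ne.symm hαγ, mem_univ γ⟩)]
        ring
      rw [hFγ, Finset.sum_congr rfl hFα, ← Finset.sum_mul, ← hSdef]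
      ring
    have hR : ∑ α, ∑ β ∈ univ.filter (fun β => β ≠ α),
        k α β * (y α - y β) ^ 2 * M α * M β = 2 * (M γ * K) := by
      simp only [Finset.filter_ne']
      rw [← Finset.sum_erase_add _ _ (mem_univ γ)]
      have hFγ : ∑ β ∈ univ.erase γ, k γ β * (y γ - y β) ^ 2 * M γ * M β = M γ * K := by
        rw [hKdef, Finset.mul_sum]
        refine Finset.sum_congr rfl fun β hβ => ?_
        rw [hyγ, hyne β (Finset.ne_of_mem_erase hβ)]
        ring
      have hFα : ∀ α ∈ univ.erase γ,
          ∑ β ∈ univ.erase α, k α β * (y α - y β) ^ 2 * M α * M β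
            = k γ α * M α * M γ := by
        intro α hα
        have hαγ : α ≠ γ := Finset.ne_of_mem_erase hα
        have hcongr : ∀ β ∈ univ.erase α,
            k α β * (y α - y β) ^ 2 * M α * M β
              = if β = γ then k α β * M β * M α else 0 := by
          intro β hβ
          by_cases hc : β = γ
          · rw [if_pos hc, hc, hyne α hαγ, hyγ]
            ring
          · rw [hyne α hαγ, hyne β hc, if_neg hc]
            ring
        rw [Finset.sum_congr rfl hcongr, Finset.sum_ite_eq' (univ.erase α) γ
          (fun β => k α β * M β * M α), if_pos (Finset.mem_erase.mpr ⟨Ne.symm hαγ, mem_univ γ⟩)]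
        rw [hk_symm γ α]
        ring
      rw [hFγ, Finset.sum_congr rfl hFα, ← Finset.sum_mul, ← hKdef]
      ring
    rw [hL, hR] at hgy
    have hSMtot : S + M γ = Mtot := Finset.sum_erase_add univ M (mem_univ γ)
    have hζS : ζ * Mtot ≤ S := by
      rw [hζ, sub_mul, one_mul, div_mul_cancel₀ _ hMtot.ne']
      have := hM_le_sup γ
      linarith
    have h3 : lam * S ≤ Mtot * K := by
      have h2m : (0:ℝ) < 2 * M γ := by linarith [hM γ]
      apply le_of_mul_le_mul_left _ h2m
      calc (2 * M γ) * (lam * S) = lam * (2 * (M γ * S)) := by ring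
        _ ≤ Mtot * (2 * (M γ * K)) := hgy
        _ = (2 * M γ) * (Mtot * K) := by ring
    have h4 : lam * ζ * Mtot ≤ Mtot * K := by
      calc lam * ζ * Mtot = lam * (ζ * Mtot) := by ring
        _ ≤ lam * S := mul_le_mul_of_nonneg_left hζS hlam
        _ ≤ Mtot * K := h3
    apply le_of_mul_le_mul_left _ hMtot
    calc Mtot * (lam * ζ) = lam * ζ * Mtot := by ring
      _ ≤ Mtot * K := h4
  -- coordinatewise application of the gap to the mean velocities
  set Q := ∑ α, ∑ β ∈ univ.erase α, ‖w α - w β‖ ^ 2 * M α * M β with hQdef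
  set Qk := ∑ α, ∑ β ∈ univ.erase α, k α β * ‖w α - w β‖ ^ 2 * M α * M β with hQkdef
  have hnorm : ∀ x : EuclideanSpace ℝ (Fin d), ‖x‖ ^ 2 = ∑ i, (x i) ^ 2 := by
    intro x
    rw [EuclideanSpace.norm_eq, Real.sq_sqrt (by positivity)]
    simp [Real.norm_eq_abs, sq_abs]
  have hsub : ∀ (p q : EuclideanSpace ℝ (Fin d)) (i : Fin d), (p - q) i = p i - q i :=
    fun p q i => rfl
  have hQi : Q = ∑ i, ∑ α, ∑ β ∈ univ.erase α, (w α i - w β i) ^ 2 * M α * M β := by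
    rw [hQdef]
    calc ∑ α, ∑ β ∈ univ.erase α, ‖w α - w β‖ ^ 2 * M α * M β
        = ∑ α, ∑ β ∈ univ.erase α, ∑ i, (w α i - w β i) ^ 2 * M α * M β := by
          refine Finset.sum_congr rfl fun α _ => Finset.sum_congr rfl fun β _ => ?_
          rw [hnorm (w α - w β), Finset.sum_mul, Finset.sum_mul]
          exact Finset.sum_congr rfl fun i _ => by rw [hsub]
      _ = ∑ α, ∑ i, ∑ β ∈ univ.erase α, (w α i - w β i) ^ 2 * M α * M β :=
          Finset.sum_congr rfl fun α _ => Finset.sum_comm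
      _ = ∑ i, ∑ α, ∑ β ∈ univ.erase α, (w α i - w β i) ^ 2 * M α * M β :=
          Finset.sum_comm
  have hQki : Qk = ∑ i, ∑ α, ∑ β ∈ univ.erase α,
      k α β * (w α i - w β i) ^ 2 * M α * M β := by
    rw [hQkdef]
    calc ∑ α, ∑ β ∈ univ.erase α, k α β * ‖w α - w β‖ ^ 2 * M α * M β
        = ∑ α, ∑ β ∈ univ.erase α, ∑ i, k α β * (w α i - w β i) ^ 2 * M α * M β := by
          refine Finset.sum_congr rfl fun α _ => Finset.sum_congr rfl fun β _ => ?_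
          rw [hnorm (w α - w β), Finset.mul_sum, Finset.sum_mul, Finset.sum_mul]
          exact Finset.sum_congr rfl fun i _ => by rw [hsub]
      _ = ∑ α, ∑ i, ∑ β ∈ univ.erase α, k α β * (w α i - w β i) ^ 2 * M α * M β :=
          Finset.sum_congr rfl fun α _ => Finset.sum_comm
      _ = ∑ i, ∑ α, ∑ β ∈ univ.erase α, k α β * (w α i - w β i) ^ 2 * M α * M β :=
          Finset.sum_comm
  have hvec : lam * Q ≤ Mtot * Qk := by
    rw [hQi, hQki, Finset.mul_sum, Finset.mul_sum]
    refine Finset.sum_le_sum fun i _ => ?_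
    have := hgap (fun α => w α i)
    simpa only [Finset.filter_ne'] using this
  -- nonnegativity
  have hQ0 : 0 ≤ Q := by
    rw [hQdef]
    refine Finset.sum_nonneg fun α _ => Finset.sum_nonneg fun β _ => ?_
    exact mul_nonneg (mul_nonneg (sq_nonneg _) (hM α).le) (hM β).le
  set G := ∑ α, g α with hGdef
  have hG0 : 0 ≤ G := Finset.sum_nonneg fun α _ => hg α
  -- total energy fluctuation
  have hS : (∑ α, ∑ β, ∫ x, ∫ y,
      ((1 / 2) * ‖u α x - u β y‖ ^ 2 + e α x + e β y) ∂(μ β) ∂(μ α))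
      = (1 / 2) * Q + 2 * (Mtot * G) := by
    have e1 : (∑ α, ∑ β, (1 / 2) * (M α * M β) * ‖w α - w β‖ ^ 2) = (1 / 2) * Q := by
      rw [hQdef, Finset.mul_sum]
      refine Finset.sum_congr rfl fun α _ => ?_
      rw [Finset.mul_sum, ← Finset.sum_erase_add _ _ (mem_univ α)]
      have hz : (1 / 2) * (M α * M α) * ‖w α - w α‖ ^ 2 = 0 := by simp
      rw [hz, add_zero]
      exact Finset.sum_congr rfl fun β _ => by ring
    have e2 : (∑ α, ∑ β, M β * g α) = Mtot * G := by
      rw [hGdef, Finset.mul_sum]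
      refine Finset.sum_congr rfl fun α _ => ?_
      rw [← Finset.sum_mul, ← hMtotdef]
    have e3 : (∑ α, ∑ β, M α * g β) = Mtot * G := by
      calc ∑ α, ∑ β, M α * g β = ∑ α, M α * G :=
            Finset.sum_congr rfl fun α _ => by rw [hGdef, Finset.mul_sum]
        _ = Mtot * G := by rw [hMtotdef, Finset.sum_mul]
    calc (∑ α, ∑ β, ∫ x, ∫ y,
        ((1 / 2) * ‖u α x - u β y‖ ^ 2 + e α x + e β y) ∂(μ β) ∂(μ α))
        = ∑ α, ∑ β, ((1 / 2) * (M α * M β) * ‖w α - w β‖ ^ 2 + M β * g α + M α * g β) :=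
          Finset.sum_congr rfl fun α _ => Finset.sum_congr rfl fun β _ => hI α β
      _ = (∑ α, ∑ β, (1 / 2) * (M α * M β) * ‖w α - w β‖ ^ 2)
          + (∑ α, ∑ β, M β * g α) + (∑ α, ∑ β, M α * g β) := by
          simp [Finset.sum_add_distrib]
      _ = (1 / 2) * Q + Mtot * G + Mtot * G := by rw [e1, e2, e3]
      _ = (1 / 2) * Q + 2 * (Mtot * G) := by ring
  -- the dissipation lower bound
  have hD : (1 / 2) * Qk + lam * ζ * G + lam * ζ * G
      ≤ ∑ α, ∑ β, k α β * ∫ x, ∫ y,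
          ((1 / 2) * ‖u α x - u β y‖ ^ 2 + e α x + e β y) ∂(μ β) ∂(μ α) := by
    have hrw : (∑ α, ∑ β, k α β * ∫ x, ∫ y,
        ((1 / 2) * ‖u α x - u β y‖ ^ 2 + e α x + e β y) ∂(μ β) ∂(μ α))
        = (∑ α, ∑ β, k α β * ((1 / 2) * (M α * M β) * ‖w α - w β‖ ^ 2))
          + (∑ α, ∑ β, k α β * (M β * g α)) + (∑ α, ∑ β, k α β * (M α * g β)) := by
      calc (∑ α, ∑ β, k α β * ∫ x, ∫ y,
          ((1 / 2) * ‖u α x - u β y‖ ^ 2 + e α x + e β y) ∂(μ β) ∂(μ α))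
          = ∑ α, ∑ β, (k α β * ((1 / 2) * (M α * M β) * ‖w α - w β‖ ^ 2)
              + k α β * (M β * g α) + k α β * (M α * g β)) :=
            Finset.sum_congr rfl fun α _ => Finset.sum_congr rfl fun β _ => by
              rw [hI α β]; ring
        _ = _ := by simp [Finset.sum_add_distrib]
    have d1 : (∑ α, ∑ β, k α β * ((1 / 2) * (M α * M β) * ‖w α - w β‖ ^ 2))
        = (1 / 2) * Qk := by
      rw [hQkdef, Finset.mul_sum]
      refine Finset.sum_congr rfl fun α _ => ?_
      rw [Finset.mul_sum, ← Finset.sum_erase_add _ _ (mem_univ α)]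
      have hz : k α α * ((1 / 2) * (M α * M α) * ‖w α - w α‖ ^ 2) = 0 := by simp
      rw [hz, add_zero]
      exact Finset.sum_congr rfl fun β _ => by ring
    have d2 : lam * ζ * G ≤ ∑ α, ∑ β, k α β * (M β * g α) := by
      rw [hGdef, Finset.mul_sum]
      refine Finset.sum_le_sum fun α _ => ?_
      have h1 : (∑ β, k α β * (M β * g α)) = (∑ β, k α β * M β) * g α := by
        rw [Finset.sum_mul]
        exact Finset.sum_congr rfl fun β _ => by ring
      have h2 : (∑ β ∈ univ.erase α, k α β * M β) ≤ ∑ β, k α β * M β :=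
        Finset.sum_le_sum_of_subset_of_nonneg (Finset.erase_subset _ _)
          (fun i _ _ => mul_nonneg (hk_nonneg α i) (hM i).le)
      calc lam * ζ * g α ≤ (∑ β ∈ univ.erase α, k α β * M β) * g α :=
            mul_le_mul_of_nonneg_right (hdeg α) (hg α)
        _ ≤ (∑ β, k α β * M β) * g α := mul_le_mul_of_nonneg_right h2 (hg α)
        _ = ∑ β, k α β * (M β * g α) := h1.symm
    have d3 : lam * ζ * G ≤ ∑ α, ∑ β, k α β * (M α * g β) := by
      rw [Finset.sum_comm, hGdef, Finset.mul_sum]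
      refine Finset.sum_le_sum fun β _ => ?_
      have h1 : (∑ α, k α β * (M α * g β)) = (∑ α, k α β * M α) * g β := by
        rw [Finset.sum_mul]
        exact Finset.sum_congr rfl fun α _ => by ring
      have h2 : (∑ α ∈ univ.erase β, k β α * M α) ≤ ∑ α, k α β * M α := by
        refine le_trans (le_of_eq (Finset.sum_congr rfl fun α _ => by rw [hk_symm β α])) ?_
        exact Finset.sum_le_sum_of_subset_of_nonneg (Finset.erase_subset _ _)
          (fun i _ _ => mul_nonneg (hk_nonneg i β) (hM i).le)
      calc lam * ζ * g β ≤ (∑ α ∈ univ.erase β, k β α * M α) * g β :=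
            mul_le_mul_of_nonneg_right (hdeg β) (hg β)
        _ ≤ (∑ α, k α β * M α) * g β := mul_le_mul_of_nonneg_right h2 (hg β)
        _ = ∑ α, k α β * (M α * g β) := h1.symm
    rw [hrw, d1]
    linarith [d2, d3]
  calc (ζ * lam / Mtot) * ∑ α, ∑ β, ∫ x, ∫ y,
        ((1 / 2) * ‖u α x - u β y‖ ^ 2 + e α x + e β y) ∂(μ β) ∂(μ α)
      = (ζ * lam / Mtot) * ((1 / 2) * Q + 2 * (Mtot * G)) := by rw [hS]
    _ ≤ (1 / 2) * Qk + lam * ζ * G + lam * ζ * G := by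
        rw [div_mul_eq_mul_div, div_le_iff₀ hMtot]
        nlinarith [hvec, mul_nonneg hlam hQ0, hζ0, hζ1, hG0, hMtot, hGdef]
    _ ≤ _ := hD
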